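/- For every integer n ≥ 0, the sum over all Dyck paths P of length 2n of 2^(number of downsteps of P that leave from odd height) equals the number of big Schröder paths of length 2n. -/

import Mathlib

/-- A step of a Schröder path: upstep, downstep, or a *double* horizontal step. -/
inductive SchStep : Type
  | up : SchStep
  | down : SchStep
  | horiz : SchStep
deriving DecidableEq

/-- The number of unit steps a step occupies: `horiz` is a double horizontal step. -/
def SchStep.len : SchStep → ℕ
  | .up => 1
  | .down => 1
  | .horiz => 2

/-- The change in height produced by a step. -/
def SchStep.rise : SchStep → ℤ
  | .up => 1
  | .down => -1
  | .horiz => 0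

/-- The length of a path (a double horizontal step counts 2). -/
def pathLen (p : List SchStep) : ℕ := (p.map SchStep.len).sum

/-- The final height of a path started at height 0. -/
def pathHeight (p : List SchStep) : ℤ := (p.map SchStep.rise).sum

/-- A big Schröder path: ends at height 0 and never goes below the x-axis. -/
def IsBigSchroeder (p : List SchStep) : Prop :=
  pathHeight p = 0 ∧ ∀ q : List SchStep, q <+: p → 0 ≤ pathHeight q

/-- A little Schröder path: a big Schröder path with no double horizontal step at
height 0. -/
def IsLittleSchroeder (p : List SchStep) : Prop :=
  IsBigSchroeder p ∧ ∀ q r : List SchStep, p = q ++ SchStep.horiz :: r → pathHeight q ≠ 0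

/-- A Dyck path is a list of booleans: `true` is an upstep, `false` is a downstep. -/
def dyckHeight (p : List Bool) : ℤ := (p.map fun b => if b then (1 : ℤ) else -1).sum

/-- A Dyck path: ends at height 0 and never goes below the x-axis. -/
def IsDyck (p : List Bool) : Prop :=
  dyckHeight p = 0 ∧ ∀ q : List Bool, q <+: p → 0 ≤ dyckHeight q

/-- The number of downsteps of `p` leaving from odd height. -/
def oddDownCount (p : List Bool) : ℕ :=
  (List.range p.length).countP fun i =>
    decide (p.getD i true = false ∧ dyckHeight (p.take i) % 2 = 1)

namespace SchroederAux

instance : Fintype SchStep :=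
  ⟨⟨{SchStep.up, SchStep.down, SchStep.horiz}, by decide⟩, by intro x; cases x <;> decide⟩

@[simp] lemma pathHeight_nil : pathHeight [] = 0 := rfl

@[simp] lemma pathHeight_cons (s : SchStep) (p : List SchStep) :
    pathHeight (s :: p) = s.rise + pathHeight p := by
  simp [pathHeight]

@[simp] lemma pathHeight_append (p q : List SchStep) :
    pathHeight (p ++ q) = pathHeight p + pathHeight q := by
  simp [pathHeight]

@[simp] lemma pathLen_nil : pathLen [] = 0 := rfl

@[simp] lemma pathLen_cons (s : SchStep) (p : List SchStep) :
    pathLen (s :: p) = s.len + pathLen p := by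
  simp [pathLen]

@[simp] lemma pathLen_append (p q : List SchStep) :
    pathLen (p ++ q) = pathLen p + pathLen q := by
  simp [pathLen]

/-- `Ok h p`: starting at height `h`, the path `p` never goes below 0 (after each step). -/
def Ok : ℤ → List SchStep → Prop
  | _, [] => True
  | h, s :: p => 0 ≤ h + s.rise ∧ Ok (h + s.rise) p

@[simp] lemma ok_nil (h : ℤ) : Ok h [] := trivial

@[simp] lemma ok_cons (h : ℤ) (s : SchStep) (p : List SchStep) :
    Ok h (s :: p) ↔ 0 ≤ h + s.rise ∧ Ok (h + s.rise) p := Iff.rfl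

lemma ok_mono : ∀ (p : List SchStep) {h h' : ℤ}, h ≤ h' → Ok h p → Ok h' p
  | [], _, _, _, _ => trivial
  | s :: p, h, h', hle, ⟨h0, hok⟩ =>
    ⟨le_trans h0 (by omega), ok_mono p (by omega) hok⟩

lemma ok_append : ∀ (p q : List SchStep) (h : ℤ),
    Ok h (p ++ q) ↔ Ok h p ∧ Ok (h + pathHeight p) q
  | [], q, h => by simp
  | s :: p, q, h => by
    simp only [List.cons_append, ok_cons, ok_append p q (h + s.rise), pathHeight_cons]
    constructor
    · rintro ⟨a, b, c⟩; exact ⟨⟨a, b⟩, by rwa [← add_assoc]⟩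
    · rintro ⟨⟨a, b⟩, c⟩; exact ⟨a, b, by rwa [add_assoc]⟩

lemma prefix_cons_cases {α : Type*} {q : List α} {a : α} {l : List α}
    (h : q <+: a :: l) : q = [] ∨ ∃ t, t <+: l ∧ q = a :: t := by
  rcases q with _ | ⟨b, t⟩
  · exact Or.inl rfl
  · obtain ⟨r, hr⟩ := h
    rw [List.cons_append] at hr
    injection hr with h1 h2
    exact Or.inr ⟨t, ⟨r, h2⟩, by rw [h1]⟩

lemma ok_iff : ∀ (p : List SchStep) (h : ℤ), 0 ≤ h →
    ((∀ q, q <+: p → 0 ≤ h + pathHeight q) ↔ Ok h p)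
  | [], h, h0 => by
    simp only [ok_nil, iff_true]
    intro q hq
    rw [List.prefix_nil.mp hq]; simpa
  | s :: p, h, h0 => by
    constructor
    · intro hpre
      have h1 : 0 ≤ h + s.rise := by
        simpa using hpre [s] ⟨p, rfl⟩
      refine ⟨h1, (ok_iff p (h + s.rise) h1).mp ?_⟩
      intro q hq
      have := hpre (s :: q) ((List.prefix_cons_inj s).mpr hq)
      simp only [pathHeight_cons] at this
      omega
    · rintro ⟨h1, hok⟩ q hq
      rcases prefix_cons_cases hq with rfl | ⟨t, ht, rfl⟩
      · simpa
      · have := (ok_iff p (h + s.rise) h1).mpr hok t ht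
        simp only [pathHeight_cons]
        omega

lemma isBig_iff (p : List SchStep) : IsBigSchroeder p ↔ pathHeight p = 0 ∧ Ok 0 p := by
  unfold IsBigSchroeder
  rw [← ok_iff p 0 le_rfl]
  simp

lemma big_nil : IsBigSchroeder [] := (isBig_iff []).mpr ⟨rfl, trivial⟩

lemma big_horiz_cons {t : List SchStep} (ht : IsBigSchroeder t) :
    IsBigSchroeder (SchStep.horiz :: t) := by
  rw [isBig_iff] at ht ⊢
  refine ⟨by simp [ht.1, SchStep.rise], ?_, ?_⟩
  · simp [SchStep.rise]
  · simpa [SchStep.rise] using ht.2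

lemma big_up_down {a b : List SchStep} (ha : IsBigSchroeder a) (hb : IsBigSchroeder b) :
    IsBigSchroeder (SchStep.up :: (a ++ SchStep.down :: b)) := by
  rw [isBig_iff] at ha hb ⊢
  constructor
  · simp [ha.1, hb.1, SchStep.rise]
  · refine ⟨by simp [SchStep.rise], ?_⟩
    rw [ok_append]
    refine ⟨ok_mono a (by simp [SchStep.rise]) ha.2, ?_⟩
    simp [SchStep.rise, ha.1, hb.2]

lemma gensplit : ∀ (p : List SchStep) (h : ℤ), 0 ≤ h → h + pathHeight p = -1 →
    Ok (h + 1) p →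
    ∃ q1 q2, p = q1 ++ SchStep.down :: q2 ∧ h + pathHeight q1 = 0 ∧ Ok h q1 ∧
      IsBigSchroeder q2
  | [], h, h0, hsum, _ => by simp at hsum; omega
  | s :: t, h, h0, hsum, hok => by
    by_cases hc : s = SchStep.down ∧ h = 0
    · obtain ⟨rfl, rfl⟩ := hc
      refine ⟨[], t, by simp, by simp, trivial, ?_⟩
      rw [isBig_iff]
      constructor
      · simp [SchStep.rise] at hsum; omega
      · have := hok.2
        simpa [SchStep.rise] using this
    · have h0' : 0 ≤ h + s.rise := by
        rcases s with _ | _ | _ <;> simp [SchStep.rise] at hc ⊢ <;> omega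
      have hok' : Ok (h + s.rise + 1) t := by
        have := hok.2
        have he : h + 1 + s.rise = h + s.rise + 1 := by ring
        rwa [he] at this
      obtain ⟨q1, q2, rfl, hh, hokq, hbig⟩ :=
        gensplit t (h + s.rise) h0' (by simp at hsum ⊢; omega) hok'
      exact ⟨s :: q1, q2, rfl, by simp at hh ⊢; omega, ⟨h0', hokq⟩, hbig⟩

lemma uniq : ∀ (q1 p1 : List SchStep) (h : ℤ) (q2 p2 : List SchStep),
    q1 ++ SchStep.down :: q2 = p1 ++ SchStep.down :: p2 → 0 ≤ h →
    h + pathHeight q1 = 0 → h + pathHeight p1 = 0 → Ok h q1 → Ok h p1 → q1 = p1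
  | [], [], _, _, _, _, _, _, _, _, _ => rfl
  | [], s :: t, h, q2, p2, heq, h0, hq, hp, _, hokp => by
    simp only [List.nil_append, List.cons_append] at heq
    injection heq with h1 h2
    subst h1
    simp only [pathHeight_nil, add_zero] at hq
    subst hq
    have := hokp.1
    simp [SchStep.rise] at this
  | s :: t, [], h, q2, p2, heq, h0, hq, hp, hokq, _ => by
    simp only [List.nil_append, List.cons_append] at heq
    injection heq with h1 h2
    subst h1
    simp only [pathHeight_nil, add_zero] at hp
    subst hp
    have := hokq.1
    simp [SchStep.rise] at this
  | s :: t, s' :: t', h, q2, p2, heq, h0, hq, hp, hokq, hokp => by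
    simp only [List.cons_append] at heq
    injection heq with h1 h2
    subst h1
    have := uniq t t' (h + s.rise) q2 p2 h2 hokq.1
      (by simp at hq ⊢; omega) (by simp at hp ⊢; omega) hokq.2 hokp.2
    rw [this]

lemma mem_split {q : List SchStep} (hq : IsBigSchroeder q) (hne : q ≠ []) :
    (∃ t, q = SchStep.horiz :: t ∧ IsBigSchroeder t) ∨
      ∃ a b, q = SchStep.up :: (a ++ SchStep.down :: b) ∧
        IsBigSchroeder a ∧ IsBigSchroeder b := by
  rw [isBig_iff] at hq
  rcases q with _ | ⟨s, t⟩
  · exact absurd rfl hne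
  rcases s with _ | _ | _
  · -- up
    right
    have hok : Ok (0 + 1) t := by
      have := hq.2.2
      simpa [SchStep.rise] using this
    obtain ⟨a, b, rfl, hh, hoka, hbig⟩ := gensplit t 0 le_rfl
      (by have := hq.1; simp [SchStep.rise] at this ⊢; omega) hok
    refine ⟨a, b, rfl, ?_, hbig⟩
    rw [isBig_iff]
    exact ⟨by omega, hoka⟩
  · -- down
    exfalso
    have := hq.2.1
    simp [SchStep.rise] at this
  · -- horiz
    left
    refine ⟨t, rfl, ?_⟩
    rw [isBig_iff]
    have h1 := hq.1
    have h2 := hq.2.2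
    simp [SchStep.rise] at h1 h2
    exact ⟨h1, h2⟩

lemma parity (p : List SchStep) : (pathLen p : ℤ) % 2 = pathHeight p % 2 := by
  induction p with
  | nil => rfl
  | cons s t ih =>
    rcases s with _ | _ | _ <;>
      simp only [pathLen_cons, pathHeight_cons, SchStep.len, SchStep.rise] <;>
      push_cast <;> omega

lemma even_pathLen {p : List SchStep} (hp : pathHeight p = 0) : ∃ k, pathLen p = 2 * k := by
  have := parity p
  rw [hp] at this
  refine ⟨pathLen p / 2, ?_⟩
  omega

lemma one_le_len (s : SchStep) : 1 ≤ s.len := by cases s <;> simp [SchStep.len]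

lemma length_le_pathLen (p : List SchStep) : p.length ≤ pathLen p := by
  induction p with
  | nil => simp
  | cons s t ih => have := one_le_len s; simp only [List.length_cons, pathLen_cons]; omega

lemma pathLen_eq_zero {p : List SchStep} (hp : pathLen p = 0) : p = [] := by
  rcases p with _ | ⟨s, t⟩
  · rfl
  · have := one_le_len s; simp only [pathLen_cons] at hp; omega

lemma finite_paths (n : ℕ) : {q : List SchStep | IsBigSchroeder q ∧ pathLen q = 2 * n}.Finite :=
  (List.finite_length_le SchStep (2 * n)).subset fun q hq => by
    have := length_le_pathLen q
    simp only [Set.mem_setOf_eq] at hq ⊢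
    omega

noncomputable def S (n : ℕ) : Finset (List SchStep) := (finite_paths n).toFinset

lemma mem_S {n : ℕ} {q : List SchStep} :
    q ∈ S n ↔ IsBigSchroeder q ∧ pathLen q = 2 * n := by
  simp [S, Set.Finite.mem_toFinset]

lemma S_zero : S 0 = {[]} := by
  ext q
  simp only [mem_S, Finset.mem_singleton]
  constructor
  · rintro ⟨-, hlen⟩; exact pathLen_eq_zero (by omega)
  · rintro rfl; exact ⟨big_nil, by simp⟩

/-- Decomposition step: the first-return decomposition of big Schröder paths. -/
lemma S_succ_eq (n : ℕ) :
    S (n + 1) =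
      ((S n).image (fun q => SchStep.horiz :: q)) ∪
        (((Finset.range (n + 1)).sigma fun k => S k ×ˢ S (n - k)).image
          fun x => SchStep.up :: (x.2.1 ++ SchStep.down :: x.2.2)) := by
  ext q
  simp only [Finset.mem_union, Finset.mem_image, Finset.mem_sigma, Finset.mem_range,
    Finset.mem_product, mem_S]
  constructor
  · rintro ⟨hq, hlen⟩
    have hne : q ≠ [] := by
      intro h; rw [h] at hlen; simp at hlen
    rcases mem_split hq hne with ⟨t, rfl, ht⟩ | ⟨a, b, rfl, ha, hb⟩
    · left
      refine ⟨t, ⟨ht, ?_⟩, rfl⟩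
      simp [SchStep.len] at hlen
      omega
    · right
      simp only [pathLen_cons, pathLen_append, pathLen_cons, SchStep.len] at hlen
      obtain ⟨k, hk⟩ := even_pathLen ((isBig_iff a).mp ha).1
      refine ⟨⟨k, a, b⟩, ?_, rfl⟩
      dsimp only
      exact ⟨by omega, ⟨ha, hk⟩, hb, by omega⟩
  · rintro (⟨t, ⟨⟨ht, hlen⟩, rfl⟩⟩ | ⟨⟨k, a, b⟩, hx, rfl⟩)
    · refine ⟨big_horiz_cons ht, by simp [SchStep.len]; omega⟩
    · dsimp only at hx ⊢
      obtain ⟨hk, ⟨ha, hla⟩, hb, hlb⟩ := hx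
      refine ⟨big_up_down ha hb, ?_⟩
      simp only [pathLen_cons, pathLen_append, pathLen_cons, SchStep.len]
      omega

lemma sum_S_succ (f : List SchStep → ℕ) (n : ℕ) :
    ∑ q ∈ S (n + 1), f q =
      (∑ q ∈ S n, f (SchStep.horiz :: q)) +
        ∑ k ∈ Finset.range (n + 1), ∑ a ∈ S k, ∑ b ∈ S (n - k),
          f (SchStep.up :: (a ++ SchStep.down :: b)) := by
  rw [S_succ_eq]
  rw [Finset.sum_union]
  · congr 1
    · rw [Finset.sum_image]
      intro x _ y _ h
      injection h
    · rw [Finset.sum_image, Finset.sum_sigma]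
      · refine Finset.sum_congr rfl fun k _ => ?_
        rw [Finset.sum_product]
      · rintro ⟨k, a, b⟩ hx ⟨k', a', b'⟩ hy h
        simp only [Finset.mem_coe, Finset.mem_sigma, Finset.mem_range, Finset.mem_product, mem_S] at hx hy
        injection h with _ h2
        have ha := (isBig_iff a).mp hx.2.1.1
        have ha' := (isBig_iff a').mp hy.2.1.1
        have heq : a = a' := uniq a a' 0 b b' h2 le_rfl
          (by rw [ha.1]; ring) (by rw [ha'.1]; ring) ha.2 ha'.2
        subst heq
        have hbb : b = b' := by
          have := List.append_cancel_left h2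
          injection this
        subst hbb
        have : k = k' := by
          have h1 := hx.2.1.2
          have h2' := hy.2.1.2
          omega
        subst this
        rfl
  · rw [Finset.disjoint_left]
    rintro q hq hq'
    simp only [Finset.mem_image] at hq hq'
    obtain ⟨t, -, rfl⟩ := hq
    obtain ⟨x, -, hx⟩ := hq'
    injection hx with h1 _
    exact SchStep.noConfusion h1

/-- The weight of a path started at height `h`: each downstep from odd height counts 2. -/
def w (h : ℤ) : List SchStep → ℕ
  | [] => 1
  | s :: p => (if s = SchStep.down ∧ h % 2 = 1 then 2 else 1) * w (h + s.rise) p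

@[simp] lemma w_nil (h : ℤ) : w h [] = 1 := rfl

lemma w_cons (h : ℤ) (s : SchStep) (p : List SchStep) :
    w h (s :: p) = (if s = SchStep.down ∧ h % 2 = 1 then 2 else 1) * w (h + s.rise) p := rfl

lemma w_append : ∀ (p q : List SchStep) (h : ℤ),
    w h (p ++ q) = w h p * w (h + pathHeight p) q
  | [], q, h => by simp
  | s :: p, q, h => by
    simp only [List.cons_append, w_cons, w_append p q (h + s.rise), pathHeight_cons]
    rw [mul_assoc, ← add_assoc]

lemma w_congr : ∀ (p : List SchStep) (h h' : ℤ), h % 2 = h' % 2 → w h p = w h' p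
  | [], _, _, _ => rfl
  | s :: p, h, h', hm => by
    rw [w_cons, w_cons, hm, w_congr p (h + s.rise) (h' + s.rise) (by omega)]

/-- Indicator-weight: zero on paths containing a horizontal step. -/
noncomputable def g (h : ℤ) (q : List SchStep) : ℕ :=
  if SchStep.horiz ∉ q then w h q else 0

lemma g_horiz_cons (h : ℤ) (q : List SchStep) : g h (SchStep.horiz :: q) = 0 := by
  simp [g]

lemma g_up_down {a : List SchStep} (ha : pathHeight a = 0) (b : List SchStep) :
    g 0 (SchStep.up :: (a ++ SchStep.down :: b)) = 2 * (g 1 a * g 0 b) := by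
  by_cases hma : SchStep.horiz ∈ a
  · simp [g, hma]
  by_cases hmb : SchStep.horiz ∈ b
  · simp [g, hma, hmb]
  simp only [g, hma, hmb, List.mem_cons, List.mem_append, not_false_iff, or_false,
    false_or, if_true, reduceCtorEq, not_or]
  rw [w_cons, w_append]
  simp only [SchStep.rise, ha]
  rw [w_cons]
  norm_num [SchStep.rise]
  ring

lemma g_up_down' {a : List SchStep} (ha : pathHeight a = 0) (b : List SchStep) :
    g 1 (SchStep.up :: (a ++ SchStep.down :: b)) = g 0 a * g 1 b := by
  by_cases hma : SchStep.horiz ∈ a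
  · simp [g, hma]
  by_cases hmb : SchStep.horiz ∈ b
  · simp [g, hma, hmb]
  simp only [g, hma, hmb, List.mem_cons, List.mem_append, not_false_iff, or_false,
    false_or, if_true, reduceCtorEq, not_or]
  rw [w_cons, w_append]
  simp only [SchStep.rise, ha]
  rw [w_cons]
  norm_num [SchStep.rise]
  rw [w_congr a 2 0 (by norm_num), if_neg (by simp)]

noncomputable def A (n : ℕ) : ℕ := ∑ q ∈ S n, g 0 q
noncomputable def B (n : ℕ) : ℕ := ∑ q ∈ S n, g 1 q
noncomputable def r (n : ℕ) : ℕ := (S n).card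

lemma A_zero : A 0 = 1 := by simp [A, S_zero, g, w]
lemma B_zero : B 0 = 1 := by simp [B, S_zero, g, w]
lemma r_zero : r 0 = 1 := by simp [r, S_zero]

lemma A_rec (n : ℕ) : A (n + 1) = ∑ k ∈ Finset.range (n + 1), 2 * (B k * A (n - k)) := by
  rw [A, sum_S_succ (g 0) n]
  have h1 : ∑ q ∈ S n, g 0 (SchStep.horiz :: q) = 0 :=
    Finset.sum_eq_zero fun q _ => g_horiz_cons 0 q
  rw [h1, zero_add]
  refine Finset.sum_congr rfl fun k _ => ?_
  have : ∀ a ∈ S k, ∀ b ∈ S (n - k),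
      g 0 (SchStep.up :: (a ++ SchStep.down :: b)) = 2 * (g 1 a * g 0 b) := by
    intro a ha b _
    exact g_up_down ((isBig_iff a).mp (mem_S.mp ha).1).1 b
  calc ∑ a ∈ S k, ∑ b ∈ S (n - k), g 0 (SchStep.up :: (a ++ SchStep.down :: b))
      = ∑ a ∈ S k, ∑ b ∈ S (n - k), 2 * (g 1 a * g 0 b) := by
        refine Finset.sum_congr rfl fun a ha => Finset.sum_congr rfl fun b hb => ?_
        exact this a ha b hb
    _ = 2 * (B k * A (n - k)) := by
        rw [B, A, Finset.sum_mul_sum, Finset.mul_sum]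
        refine Finset.sum_congr rfl fun a _ => ?_
        rw [Finset.mul_sum]

lemma B_rec (n : ℕ) : B (n + 1) = ∑ k ∈ Finset.range (n + 1), A k * B (n - k) := by
  rw [B, sum_S_succ (g 1) n]
  have h1 : ∑ q ∈ S n, g 1 (SchStep.horiz :: q) = 0 :=
    Finset.sum_eq_zero fun q _ => g_horiz_cons 1 q
  rw [h1, zero_add]
  refine Finset.sum_congr rfl fun k _ => ?_
  calc ∑ a ∈ S k, ∑ b ∈ S (n - k), g 1 (SchStep.up :: (a ++ SchStep.down :: b))
      = ∑ a ∈ S k, ∑ b ∈ S (n - k), g 0 a * g 1 b := by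
        refine Finset.sum_congr rfl fun a ha => Finset.sum_congr rfl fun b hb => ?_
        exact g_up_down' ((isBig_iff a).mp (mem_S.mp ha).1).1 b
    _ = A k * B (n - k) := by
        rw [A, B, Finset.sum_mul_sum]

lemma r_rec (n : ℕ) : r (n + 1) = r n + ∑ k ∈ Finset.range (n + 1), r k * r (n - k) := by
  have := sum_S_succ (fun _ => 1) n
  simp only [Finset.sum_const, smul_eq_mul, mul_one] at this
  simpa [r] using this

lemma A_eq_two_B (n : ℕ) : A (n + 1) = 2 * B (n + 1) := by
  rw [A_rec, B_rec, Finset.mul_sum]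
  rw [← Finset.sum_range_reflect (fun k => 2 * (A k * B (n - k))) (n + 1)]
  refine Finset.sum_congr rfl fun k hk => ?_
  rw [Finset.mem_range] at hk
  have h1 : n + 1 - 1 - k = n - k := by omega
  have h2 : n - (n - k) = k := by omega
  rw [h1, h2]
  ring

lemma A_schroeder_rec (n : ℕ) :
    A (n + 1) = A n + ∑ k ∈ Finset.range (n + 1), A k * A (n - k) := by
  have h1 : A (n + 1) = ∑ k ∈ Finset.range n, 2 * (B (k + 1) * A (n - (k + 1))) +
      2 * (B 0 * A (n - 0)) := by
    rw [A_rec, Finset.sum_range_succ']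
  have h2 : ∑ k ∈ Finset.range (n + 1), A k * A (n - k) =
      ∑ k ∈ Finset.range n, A (k + 1) * A (n - (k + 1)) + A 0 * A (n - 0) := by
    rw [Finset.sum_range_succ']
  have h3 : ∀ k, 2 * (B (k + 1) * A (n - (k + 1))) = A (k + 1) * A (n - (k + 1)) := by
    intro k
    rw [← mul_assoc, ← A_eq_two_B k]
  rw [h1, h2, B_zero, A_zero]
  rw [Finset.sum_congr rfl fun k _ => h3 k]
  simp only [Nat.sub_zero, one_mul]
  omega

lemma r_eq_A : ∀ n, r n = A n := by
  intro n
  induction n using Nat.strong_induction_on with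
  | _ n ih =>
    rcases n with _ | m
    · rw [r_zero, A_zero]
    · rw [r_rec, A_schroeder_rec, ih m (by omega)]
      congr 1
      refine Finset.sum_congr rfl fun k hk => ?_
      rw [Finset.mem_range] at hk
      rw [ih k (by omega), ih (m - k) (by omega)]

/-- Conversion of a Dyck step to a Schröder step. -/
def cnv (b : Bool) : SchStep := if b then SchStep.up else SchStep.down

lemma cnv_injective : Function.Injective cnv := by
  intro a b h
  cases a <;> cases b <;> simp [cnv] at h ⊢

@[simp] lemma dyckHeight_nil : dyckHeight [] = 0 := rfl

@[simp] lemma dyckHeight_cons (b : Bool) (p : List Bool) :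
    dyckHeight (b :: p) = (if b then (1 : ℤ) else -1) + dyckHeight p := by
  simp [dyckHeight]

@[simp] lemma rise_cnv (b : Bool) : (cnv b).rise = if b then (1 : ℤ) else -1 := by
  cases b <;> simp [cnv, SchStep.rise]

lemma height_map_cnv (p : List Bool) : pathHeight (p.map cnv) = dyckHeight p := by
  induction p with
  | nil => rfl
  | cons b t ih => simp [ih]

lemma len_map_cnv (p : List Bool) : pathLen (p.map cnv) = p.length := by
  induction p with
  | nil => rfl
  | cons b t ih =>
    simp only [List.map_cons, pathLen_cons, List.length_cons, ih]
    cases b <;> simp [cnv, SchStep.len] <;> omega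

lemma horiz_not_mem_map_cnv (p : List Bool) : SchStep.horiz ∉ p.map cnv := by
  intro h
  obtain ⟨b, -, hb⟩ := List.mem_map.mp h
  cases b <;> simp [cnv] at hb

lemma dyck_iff_big (p : List Bool) : IsDyck p ↔ IsBigSchroeder (p.map cnv) := by
  constructor
  · rintro ⟨h1, h2⟩
    constructor
    · rw [height_map_cnv]; exact h1
    · intro q hq
      rw [List.prefix_iff_eq_take] at hq
      rw [hq, ← List.map_take, height_map_cnv]
      exact h2 _ (List.take_prefix _ p)
  · rintro ⟨h1, h2⟩
    constructor
    · rw [← height_map_cnv]; exact h1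
    · intro q hq
      rw [← height_map_cnv]
      exact h2 _ (hq.map cnv)

/-- The map from Schröder steps back to Dyck steps. -/
def vnc : SchStep → Bool
  | .up => true
  | _ => false

lemma map_cnv_vnc {q : List SchStep} (hq : SchStep.horiz ∉ q) :
    (q.map vnc).map cnv = q := by
  induction q with
  | nil => rfl
  | cons s t ih =>
    simp only [List.mem_cons, not_or] at hq
    rw [List.map_cons, List.map_cons, ih hq.2]
    rcases s with _ | _ | _
    · rfl
    · rfl
    · exact absurd rfl hq.1

lemma count_w (p : List Bool) : ∀ h : ℤ,
    2 ^ ((List.range p.length).countP fun i =>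
        decide (p.getD i true = false ∧ (h + dyckHeight (p.take i)) % 2 = 1)) =
      w h (p.map cnv) := by
  induction p with
  | nil => intro h; simp [w]
  | cons b t ih =>
    intro h
    rw [List.length_cons, List.range_succ_eq_map, List.countP_cons, List.countP_map]
    have hfun : ((fun i => decide ((b :: t).getD i true = false ∧
          (h + dyckHeight ((b :: t).take i)) % 2 = 1)) ∘ Nat.succ) =
        fun i => decide (t.getD i true = false ∧
          ((h + if b then (1 : ℤ) else -1) + dyckHeight (t.take i)) % 2 = 1) := by
      funext i
      simp only [Function.comp_apply, List.getD_cons_succ, List.take_succ_cons,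
        dyckHeight_cons, add_assoc]
    rw [hfun]
    have h0 : (decide ((b :: t).getD 0 true = false ∧
        (h + dyckHeight ((b :: t).take 0)) % 2 = 1)) =
        decide (b = false ∧ h % 2 = 1) := by
      simp
    rw [h0]
    rw [pow_add, ih (h + if b then (1 : ℤ) else -1)]
    rw [List.map_cons, w_cons]
    cases b
    · by_cases hp : h % 2 = 1
      · simp [cnv, hp, mul_comm, SchStep.rise]
      · simp [cnv, hp, mul_comm, SchStep.rise]
    · simp [cnv, SchStep.rise]

lemma odd_eq (p : List Bool) : 2 ^ oddDownCount p = w 0 (p.map cnv) := by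
  have := count_w p 0
  simpa only [zero_add, oddDownCount] using this

lemma finite_dyck (n : ℕ) : {p : List Bool | IsDyck p ∧ p.length = 2 * n}.Finite :=
  (List.finite_length_le Bool (2 * n)).subset fun p hp => by
    simp only [Set.mem_setOf_eq] at hp ⊢
    omega

end SchroederAux

/-- The total weight of Dyck paths of length `2n`, where each path is weighted by
`2 ^ (number of downsteps from odd height)`, equals the number of big Schröder paths
of length `2n`. -/
theorem weighted_dyck_eq_big_schroeder (n : ℕ) :
    (∑ᶠ p ∈ {p : List Bool | IsDyck p ∧ p.length = 2 * n}, 2 ^ oddDownCount p) =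
      Nat.card {q : List SchStep // IsBigSchroeder q ∧ pathLen q = 2 * n} := by
  classical
  have hfin := SchroederAux.finite_dyck n
  rw [← Set.Finite.coe_toFinset hfin, finsum_mem_coe_finset]
  have hR : Nat.card {q : List SchStep // IsBigSchroeder q ∧ pathLen q = 2 * n} = SchroederAux.r n := by
    have h1 : {q : List SchStep | IsBigSchroeder q ∧ pathLen q = 2 * n}.ncard = (SchroederAux.S n).card :=
      Set.ncard_eq_toFinset_card _ (SchroederAux.finite_paths n)
    unfold SchroederAux.r
    rw [← h1, ← Nat.card_coe_set_eq]
    rfl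
  rw [hR, SchroederAux.r_eq_A, SchroederAux.A]
  have h2 : (∑ q ∈ SchroederAux.S n, SchroederAux.g 0 q) =
      ∑ q ∈ (SchroederAux.S n).filter (fun q => SchStep.horiz ∉ q), SchroederAux.w 0 q := by
    rw [Finset.sum_filter]
    simp only [SchroederAux.g]
  rw [h2]
  refine Finset.sum_bij (fun p _ => p.map SchroederAux.cnv) ?_ ?_ ?_ ?_
  · intro p hp
    rw [Set.Finite.mem_toFinset] at hp
    rw [Finset.mem_filter, SchroederAux.mem_S]
    refine ⟨⟨(SchroederAux.dyck_iff_big p).mp hp.1, ?_⟩, SchroederAux.horiz_not_mem_map_cnv p⟩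
    rw [SchroederAux.len_map_cnv]
    exact hp.2
  · intro p _ p' _ h
    exact List.map_injective_iff.mpr SchroederAux.cnv_injective h
  · intro q hq
    rw [Finset.mem_filter, SchroederAux.mem_S] at hq
    obtain ⟨⟨hbig, hlen⟩, hnm⟩ := hq
    refine ⟨q.map SchroederAux.vnc, ?_, SchroederAux.map_cnv_vnc hnm⟩
    rw [Set.Finite.mem_toFinset]
    constructor
    · rw [SchroederAux.dyck_iff_big, SchroederAux.map_cnv_vnc hnm]
      exact hbig
    · have := SchroederAux.len_map_cnv (q.map SchroederAux.vnc)
      rw [SchroederAux.map_cnv_vnc hnm] at this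
      omega
  · intro p _
    exact SchroederAux.odd_eq p
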